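/- Let 𝒫₁, 𝒫₀ be real n_p × n_q matrices, let Q_p be a symmetric real n_p × n_p matrix and Q_q a symmetric real n_q × n_q matrix, and let a < b. Let p : ℝ × [a, b] → ℝ^{n_p} and q : ℝ × [a, b] → ℝ^{n_q} be continuously differentiable, set e_p = Q_p·p and e_q = Q_q·q, and suppose that on ℝ × [a, b]: ∂p/∂t = 𝒫₁·∂e_q/∂ξ + 𝒫₀·e_q and ∂q/∂t = 𝒫₁ᵀ·∂e_p/∂ξ − 𝒫₀ᵀ·e_p. Then the energy H(t) = (1/2)·∫_a^b [p(t,ξ)ᵀ·Q_p·p(t,ξ) + q(t,ξ)ᵀ·Q_q·q(t,ξ)] dξ is differentiable in t and dH/dt (t) = e_p(t,b)ᵀ·𝒫₁·e_q(t,b) − e_p(t,a)ᵀ·𝒫₁·e_q(t,a). -/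

import Mathlib

open Matrix

section helpers

variable {n m : ℕ}

lemma helper_dot_symm (A : Matrix (Fin n) (Fin m) ℝ) (x : Fin n → ℝ) (y : Fin m → ℝ) :
    x ⬝ᵥ A.mulVec y = y ⬝ᵥ Aᵀ.mulVec x := by
  simp only [dotProduct, Matrix.mulVec, Matrix.transpose_apply, Finset.mul_sum]
  rw [Finset.sum_comm]
  exact Finset.sum_congr rfl fun i _ => Finset.sum_congr rfl fun j _ => by
    ring

lemma helper_hasDerivAt_mulVec (A : Matrix (Fin n) (Fin m) ℝ) {v : ℝ → Fin m → ℝ}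
    {v' : Fin m → ℝ} {t : ℝ} (hv : HasDerivAt v v' t) :
    HasDerivAt (fun s => A.mulVec (v s)) (A.mulVec v') t := by
  rw [hasDerivAt_pi]
  intro i
  simp only [Matrix.mulVec, dotProduct]
  exact HasDerivAt.fun_sum fun j _ => (hasDerivAt_pi.mp hv j).const_mul _

lemma helper_hasDerivAt_dot (A : Matrix (Fin n) (Fin m) ℝ) {u : ℝ → Fin n → ℝ}
    {v : ℝ → Fin m → ℝ} {u' : Fin n → ℝ} {v' : Fin m → ℝ} {t : ℝ}
    (hu : HasDerivAt u u' t) (hv : HasDerivAt v v' t) :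
    HasDerivAt (fun s => u s ⬝ᵥ A.mulVec (v s))
      (u' ⬝ᵥ A.mulVec (v t) + u t ⬝ᵥ A.mulVec v') t := by
  have H : HasDerivAt (fun s => ∑ i, u s i * A.mulVec (v s) i)
      (∑ i, (u' i * A.mulVec (v t) i + u t i * A.mulVec v' i)) t :=
    HasDerivAt.fun_sum fun i _ =>
      (hasDerivAt_pi.mp hu i).mul (hasDerivAt_pi.mp (helper_hasDerivAt_mulVec A hv) i)
  simpa [dotProduct, Finset.sum_add_distrib] using H

lemma helper_continuous_mulVec (A : Matrix (Fin n) (Fin m) ℝ) {v : ℝ → Fin m → ℝ}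
    (hv : Continuous v) : Continuous fun s => A.mulVec (v s) := by
  refine continuous_pi fun i => ?_
  simp only [Matrix.mulVec, dotProduct]
  exact continuous_finset_sum _ fun j _ => continuous_const.mul ((continuous_apply j).comp hv)

lemma helper_continuous_dot (A : Matrix (Fin n) (Fin m) ℝ) {u : ℝ → Fin n → ℝ}
    {v : ℝ → Fin m → ℝ} (hu : Continuous u) (hv : Continuous v) :
    Continuous fun s => u s ⬝ᵥ A.mulVec (v s) := by
  simp only [dotProduct]
  exact continuous_finset_sum _ fun i _ => ((continuous_apply i).comp hu).mul
    ((continuous_apply i).comp (helper_continuous_mulVec A hv))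

lemma helper_contDiff_dot (A : Matrix (Fin n) (Fin m) ℝ) {u : ℝ × ℝ → Fin n → ℝ}
    {v : ℝ × ℝ → Fin m → ℝ} (hu : ContDiff ℝ 1 u) (hv : ContDiff ℝ 1 v) :
    ContDiff ℝ 1 fun x => u x ⬝ᵥ A.mulVec (v x) := by
  simp only [dotProduct, Matrix.mulVec]
  exact ContDiff.sum fun i _ => (contDiff_pi.mp hu i).mul
    (ContDiff.sum fun j _ => contDiff_const.mul (contDiff_pi.mp hv j))

lemma helper_slice_t {E : Type*} [NormedAddCommGroup E] [NormedSpace ℝ E]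
    {F : ℝ × ℝ → E} (hF : ContDiff ℝ 1 F) (t ξ : ℝ) :
    HasDerivAt (fun s => F (s, ξ)) (fderiv ℝ F (t, ξ) (1, 0)) t := by
  have h1 : HasDerivAt (fun s : ℝ => (s, ξ)) ((1 : ℝ), (0 : ℝ)) t :=
    (hasDerivAt_id t).prodMk (hasDerivAt_const t ξ)
  exact ((hF.differentiable one_ne_zero (t, ξ)).hasFDerivAt).comp_hasDerivAt t h1

lemma helper_slice_x {E : Type*} [NormedAddCommGroup E] [NormedSpace ℝ E]
    {F : ℝ × ℝ → E} (hF : ContDiff ℝ 1 F) (t ξ : ℝ) :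
    HasDerivAt (fun ζ => F (t, ζ)) (fderiv ℝ F (t, ξ) (0, 1)) ξ := by
  have h1 : HasDerivAt (fun ζ : ℝ => (t, ζ)) ((0 : ℝ), (1 : ℝ)) ξ :=
    (hasDerivAt_const ξ t).prodMk (hasDerivAt_id ξ)
  exact ((hF.differentiable one_ne_zero (t, ξ)).hasFDerivAt).comp_hasDerivAt ξ h1

end helpers

/-- Energy balance of a linear 1D port-Hamiltonian system on `[a, b]` with quadratic
Hamiltonian density: under the dynamics `∂p/∂t = 𝒫₁ ∂e_q/∂ξ + 𝒫₀ e_q`,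
`∂q/∂t = 𝒫₁ᵀ ∂e_p/∂ξ - 𝒫₀ᵀ e_p` with co-energy variables `e_p = Q_p p`, `e_q = Q_q q`,
the time derivative of the total energy is given purely by boundary terms:
`dH/dt = e_p(t,b)ᵀ 𝒫₁ e_q(t,b) - e_p(t,a)ᵀ 𝒫₁ e_q(t,a)`. -/
theorem pH_1D_energy_balance
    (np nq : ℕ) (P1 P0 : Matrix (Fin np) (Fin nq) ℝ)
    (Qp : Matrix (Fin np) (Fin np) ℝ) (hQp : Qp.IsSymm)
    (Qq : Matrix (Fin nq) (Fin nq) ℝ) (hQq : Qq.IsSymm)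
    (a b : ℝ) (hab : a < b)
    (p : ℝ × ℝ → Fin np → ℝ) (q : ℝ × ℝ → Fin nq → ℝ)
    (hp : ContDiff ℝ 1 p) (hq : ContDiff ℝ 1 q)
    (ep : ℝ → ℝ → Fin np → ℝ) (eq' : ℝ → ℝ → Fin nq → ℝ)
    (hep : ∀ t ξ, ep t ξ = Qp.mulVec (p (t, ξ)))
    (heq : ∀ t ξ, eq' t ξ = Qq.mulVec (q (t, ξ)))
    (hpde_p : ∀ t : ℝ, ∀ ξ ∈ Set.Icc a b,
      deriv (fun s => p (s, ξ)) t =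
        P1.mulVec (deriv (fun ζ => eq' t ζ) ξ) + P0.mulVec (eq' t ξ))
    (hpde_q : ∀ t : ℝ, ∀ ξ ∈ Set.Icc a b,
      deriv (fun s => q (s, ξ)) t =
        P1ᵀ.mulVec (deriv (fun ζ => ep t ζ) ξ) - P0ᵀ.mulVec (ep t ξ))
    (H : ℝ → ℝ)
    (hH : ∀ t, H t = (1 / 2) *
      ∫ ξ in a..b,
        (p (t, ξ) ⬝ᵥ Qp.mulVec (p (t, ξ)) + q (t, ξ) ⬝ᵥ Qq.mulVec (q (t, ξ)))) :
    ∀ t, HasDerivAt H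
      (ep t b ⬝ᵥ P1.mulVec (eq' t b) - ep t a ⬝ᵥ P1.mulVec (eq' t a)) t := by
  intro t₀
  set f : ℝ × ℝ → ℝ := fun x => p x ⬝ᵥ Qp.mulVec (p x) + q x ⬝ᵥ Qq.mulVec (q x) with hf_def
  have hf : ContDiff ℝ 1 f := (helper_contDiff_dot Qp hp hp).add (helper_contDiff_dot Qq hq hq)
  set G : ℝ × ℝ → ℝ := fun x => fderiv ℝ f x (1, 0) with hG_def
  have contG : Continuous G := (hf.continuous_fderiv one_ne_zero).clm_apply continuous_const
  have hGd : ∀ t ξ, HasDerivAt (fun s => f (s, ξ)) (G (t, ξ)) t := fun t ξ =>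
    helper_slice_t hf t ξ
  have hpt : ∀ t ξ, HasDerivAt (fun s => p (s, ξ)) (fderiv ℝ p (t, ξ) (1, 0)) t := fun t ξ =>
    helper_slice_t hp t ξ
  have hqt : ∀ t ξ, HasDerivAt (fun s => q (s, ξ)) (fderiv ℝ q (t, ξ) (1, 0)) t := fun t ξ =>
    helper_slice_t hq t ξ
  have hpx : ∀ t ξ, HasDerivAt (fun ζ => p (t, ζ)) (fderiv ℝ p (t, ξ) (0, 1)) ξ := fun t ξ =>
    helper_slice_x hp t ξ
  have hqx : ∀ t ξ, HasDerivAt (fun ζ => q (t, ζ)) (fderiv ℝ q (t, ξ) (0, 1)) ξ := fun t ξ =>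
    helper_slice_x hq t ξ
  have hepf : ∀ t, (fun ζ => ep t ζ) = fun ζ => Qp.mulVec (p (t, ζ)) := fun t => funext (hep t)
  have heqf : ∀ t, (fun ζ => eq' t ζ) = fun ζ => Qq.mulVec (q (t, ζ)) := fun t => funext (heq t)
  have hepd : ∀ t ξ, HasDerivAt (fun ζ => ep t ζ) (Qp.mulVec (fderiv ℝ p (t, ξ) (0, 1))) ξ := by
    intro t ξ; rw [hepf t]; exact helper_hasDerivAt_mulVec Qp (hpx t ξ)
  have heqd : ∀ t ξ, HasDerivAt (fun ζ => eq' t ζ) (Qq.mulVec (fderiv ℝ q (t, ξ) (0, 1))) ξ := by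
    intro t ξ; rw [heqf t]; exact helper_hasDerivAt_mulVec Qq (hqx t ξ)
  set Φ : ℝ → ℝ := fun ξ => ep t₀ ξ ⬝ᵥ P1.mulVec (eq' t₀ ξ) with hΦ_def
  set Φ' : ℝ → ℝ := fun ξ =>
      Qp.mulVec (fderiv ℝ p (t₀, ξ) (0, 1)) ⬝ᵥ P1.mulVec (eq' t₀ ξ)
      + ep t₀ ξ ⬝ᵥ P1.mulVec (Qq.mulVec (fderiv ℝ q (t₀, ξ) (0, 1))) with hΦ'_def
  have hΦd : ∀ ξ, HasDerivAt Φ (Φ' ξ) ξ := fun ξ =>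
    helper_hasDerivAt_dot P1 (hepd t₀ ξ) (heqd t₀ ξ)
  have hkey : ∀ ξ ∈ Set.Icc a b, G (t₀, ξ) = 2 * Φ' ξ := by
    intro ξ hξ
    have h1 : HasDerivAt (fun s => f (s, ξ))
        (fderiv ℝ p (t₀, ξ) (1, 0) ⬝ᵥ Qp.mulVec (p (t₀, ξ))
          + p (t₀, ξ) ⬝ᵥ Qp.mulVec (fderiv ℝ p (t₀, ξ) (1, 0))
          + (fderiv ℝ q (t₀, ξ) (1, 0) ⬝ᵥ Qq.mulVec (q (t₀, ξ))
            + q (t₀, ξ) ⬝ᵥ Qq.mulVec (fderiv ℝ q (t₀, ξ) (1, 0)))) t₀ :=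
      (helper_hasDerivAt_dot Qp (hpt t₀ ξ) (hpt t₀ ξ)).add
        (helper_hasDerivAt_dot Qq (hqt t₀ ξ) (hqt t₀ ξ))
    have hGval := (hGd t₀ ξ).unique h1
    have hsymp : p (t₀, ξ) ⬝ᵥ Qp.mulVec (fderiv ℝ p (t₀, ξ) (1, 0))
        = fderiv ℝ p (t₀, ξ) (1, 0) ⬝ᵥ Qp.mulVec (p (t₀, ξ)) := by
      rw [helper_dot_symm, hQp.eq]
    have hsymq : q (t₀, ξ) ⬝ᵥ Qq.mulVec (fderiv ℝ q (t₀, ξ) (1, 0))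
        = fderiv ℝ q (t₀, ξ) (1, 0) ⬝ᵥ Qq.mulVec (q (t₀, ξ)) := by
      rw [helper_dot_symm, hQq.eq]
    have hptval : fderiv ℝ p (t₀, ξ) (1, 0)
        = P1.mulVec (Qq.mulVec (fderiv ℝ q (t₀, ξ) (0, 1))) + P0.mulVec (eq' t₀ ξ) := by
      rw [← (hpt t₀ ξ).deriv, hpde_p t₀ ξ hξ, (heqd t₀ ξ).deriv]
    have hqtval : fderiv ℝ q (t₀, ξ) (1, 0)
        = P1ᵀ.mulVec (Qp.mulVec (fderiv ℝ p (t₀, ξ) (0, 1))) - P0ᵀ.mulVec (ep t₀ ξ) := by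
      rw [← (hqt t₀ ξ).deriv, hpde_q t₀ ξ hξ, (hepd t₀ ξ).deriv]
    rw [hGval, hsymp, hsymq, hptval, hqtval, hΦ'_def]
    rw [← hep t₀ ξ, ← heq t₀ ξ]
    set Ep := ep t₀ ξ
    set Eq := eq' t₀ ξ
    set Epx := Qp.mulVec (fderiv ℝ p (t₀, ξ) (0, 1))
    set Eqx := Qq.mulVec (fderiv ℝ q (t₀, ξ) (0, 1))
    have e1 : P1.mulVec Eqx ⬝ᵥ Ep = Ep ⬝ᵥ P1.mulVec Eqx := dotProduct_comm _ _
    have e2 : P1ᵀ.mulVec Epx ⬝ᵥ Eq = Epx ⬝ᵥ P1.mulVec Eq := by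
      rw [dotProduct_comm, helper_dot_symm, Matrix.transpose_transpose]
    have e3 : P0.mulVec Eq ⬝ᵥ Ep = Ep ⬝ᵥ P0.mulVec Eq := dotProduct_comm _ _
    have e4 : P0ᵀ.mulVec Ep ⬝ᵥ Eq = Ep ⬝ᵥ P0.mulVec Eq := by
      rw [dotProduct_comm, helper_dot_symm, Matrix.transpose_transpose]
    simp only [add_dotProduct, sub_dotProduct, e1, e2, e3, e4]
    ring
  have hcont_slice : ∀ t : ℝ, Continuous fun ξ => f (t, ξ) := fun t =>
    hf.continuous.comp (Continuous.prodMk_right t)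
  have hmain : HasDerivAt (fun t => ∫ ξ in a..b, f (t, ξ)) (∫ ξ in a..b, G (t₀, ξ)) t₀ := by
    obtain ⟨C, hC⟩ :=
      ((isCompact_closedBall t₀ 1).prod isCompact_uIcc).exists_bound_of_continuousOn
        contG.continuousOn
    exact (intervalIntegral.hasDerivAt_integral_of_dominated_loc_of_deriv_le
      (F := fun t ξ => f (t, ξ)) (F' := fun t ξ => G (t, ξ)) (bound := fun _ => C)
      (Metric.ball_mem_nhds t₀ one_pos)
      (Filter.Eventually.of_forall fun t => (hcont_slice t).aestronglyMeasurable)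
      ((hcont_slice t₀).intervalIntegrable a b)
      ((contG.comp (Continuous.prodMk_right t₀)).aestronglyMeasurable)
      (MeasureTheory.ae_of_all _ fun ξ hξ x hx =>
        hC (x, ξ) ⟨Metric.ball_subset_closedBall hx, Set.uIoc_subset_uIcc hξ⟩)
      intervalIntegrable_const
      (MeasureTheory.ae_of_all _ fun ξ _ x _ => hGd x ξ)).2
  have hcontΦ' : Continuous Φ' := by
    have cpx : Continuous fun ξ => fderiv ℝ p (t₀, ξ) ((0 : ℝ), (1 : ℝ)) :=
      ((hp.continuous_fderiv one_ne_zero).comp (Continuous.prodMk_right t₀)).clm_apply continuous_const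
    have cqx : Continuous fun ξ => fderiv ℝ q (t₀, ξ) ((0 : ℝ), (1 : ℝ)) :=
      ((hq.continuous_fderiv one_ne_zero).comp (Continuous.prodMk_right t₀)).clm_apply continuous_const
    have cep : Continuous fun ξ => ep t₀ ξ := by
      rw [hepf t₀]
      exact helper_continuous_mulVec Qp (hp.continuous.comp (Continuous.prodMk_right t₀))
    have ceq : Continuous fun ξ => eq' t₀ ξ := by
      rw [heqf t₀]
      exact helper_continuous_mulVec Qq (hq.continuous.comp (Continuous.prodMk_right t₀))
    rw [hΦ'_def]
    exact (helper_continuous_dot P1 (helper_continuous_mulVec Qp cpx) ceq).add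
      (helper_continuous_dot P1 cep (helper_continuous_mulVec Qq cqx))
  have hIval : ∫ ξ in a..b, G (t₀, ξ) = 2 * Φ b - 2 * Φ a := by
    have hcongr : ∫ ξ in a..b, G (t₀, ξ) = ∫ ξ in a..b, 2 * Φ' ξ :=
      intervalIntegral.integral_congr fun ξ hξ =>
        hkey ξ (by rwa [Set.uIcc_of_le hab.le] at hξ)
    rw [hcongr]
    exact intervalIntegral.integral_eq_sub_of_hasDerivAt
      (f := fun ξ => 2 * Φ ξ) (f' := fun ξ => 2 * Φ' ξ)
      (fun ξ _ => HasDerivAt.const_mul 2 (hΦd ξ))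
      ((continuous_const.mul hcontΦ').intervalIntegrable a b)
  have hHfun : H = fun t => (1 / 2 : ℝ) * ∫ ξ in a..b, f (t, ξ) := funext fun t => hH t
  rw [hHfun]
  have hfinal := HasDerivAt.const_mul ((1 : ℝ) / 2) hmain
  rw [hIval] at hfinal
  refine hfinal.congr_deriv ?_
  rw [hΦ_def]
  ring
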